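/- For any element w of the wreath product W_{r,n} and any nonnegative integer k, the character χ^n_k of the W_{r,n}-action on V^{⊗n} (where V = C^{k+1} ⊕ C^k ⊕ ··· ⊕ C^k with r summands, S_n permuting tensor factors and the generator s_0 scaling the first factor by ζ^{color}) equals (rk+1)^{ℓ_n(w)}, where ℓ_n(w) is the number of parts of the 0-th component of the cycle type of w. -/

import Mathlib

/-- The color of the `v`-th basis vector of
`V = V⁽⁰⁾ ⊕ V⁽¹⁾ ⊕ ⋯ ⊕ V⁽ʳ⁻¹⁾` where `dim V⁽⁰⁾ = k+1` and `dim V⁽ⁱ⁾ = k`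
for `i ≥ 1` (basis vectors ordered color by color). -/
def colorOf (k : ℕ) (v : ℕ) : ℕ :=
  if v < k + 1 then 0 else (v - (k + 1)) / k + 1

/-- `ℓ_n(w)`: the number of parts of the `0`-th component of the cycle type of
`w = (σ, x) ∈ W_{r,n} = Z_r ≀ S_n`, i.e. the number of cycles of `σ`
(including fixed points) whose total color is `0` in `Z_r`. -/
def blockLen (r n : ℕ) (σ : Equiv.Perm (Fin n)) (x : Fin n → ZMod r) : ℕ :=
  (σ.cycleFactorsFinset.filter (fun c => (∑ i ∈ c.support, x i) = 0)).card +
    (Finset.univ.filter (fun i : Fin n => σ i = i ∧ x i = 0)).card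

/-- The character `χ^n_k` of the `W_{r,n}`-action on `V^{⊗n}` (where `S_n`
permutes the tensor factors and `s_0` scales by `ζ^{color}`) evaluated at
`w = (σ, x)` equals `(rk+1)^{ℓ_n(w)}`.  The left-hand side is the trace of
`w` on `V^{⊗n}`, computed in the standard basis indexed by
`b : Fin n → Fin (rk+1)`: a basis vector is fixed (up to the phase
`∏ᵢ ζ^{xᵢ · color(bᵢ)}`) iff `b ∘ σ = b`. -/
lemma colorOf_zero (k : ℕ) : colorOf k 0 = 0 := by simp [colorOf]

lemma colorOf_succ {k m : ℕ} (hk : 0 < k) : colorOf k (m + 1) = m / k := by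
  unfold colorOf
  rcases lt_or_ge m k with h | h
  · rw [if_pos (by omega), Nat.div_eq_of_lt h]
  · rw [if_neg (by omega), Nat.succ_sub_succ, ← Nat.div_eq_sub_div hk h]

lemma key_sum (r k : ℕ) (hr : 0 < r) (ζ : ℂ) (hζ : IsPrimitiveRoot ζ r) (s : ZMod r) :
    ∑ v : Fin (r * k + 1), ζ ^ (s.val * colorOf k (v : ℕ)) =
      if s = 0 then ((r : ℂ) * k + 1) else 1 := by
  haveI : NeZero r := ⟨hr.ne'⟩
  rw [Fin.sum_univ_eq_sum_range (fun m => ζ ^ (s.val * colorOf k m)), Finset.sum_range_succ']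
  have h2 : ∑ m ∈ Finset.range (r * k), ζ ^ (s.val * colorOf k (m + 1)) =
      ∑ p ∈ Finset.range r ×ˢ Finset.range k, (ζ ^ s.val) ^ p.1 := by
    refine Finset.sum_nbij' (fun m => (m / k, m % k)) (fun p => p.1 * k + p.2) ?_ ?_ ?_ ?_ ?_
    · intro m hm
      rw [Finset.mem_range] at hm
      have hk : 0 < k := by
        rcases Nat.eq_zero_or_pos k with h | h
        · subst h; simp at hm
        · exact h
      simp only [Finset.mem_product, Finset.mem_range]
      exact ⟨(Nat.div_lt_iff_lt_mul hk).2 hm, Nat.mod_lt _ hk⟩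
    · intro p hp
      simp only [Finset.mem_product, Finset.mem_range] at hp
      rw [Finset.mem_range]
      calc p.1 * k + p.2 < p.1 * k + k := by omega
        _ = (p.1 + 1) * k := by ring
        _ ≤ r * k := Nat.mul_le_mul_right k hp.1
    · intro m _
      exact Nat.div_add_mod' m k
    · intro p hp
      simp only [Finset.mem_product, Finset.mem_range] at hp
      have hk : 0 < k := lt_of_le_of_lt (Nat.zero_le _) hp.2
      ext
      · simp only [mul_comm p.1 k, Nat.mul_add_div hk, Nat.div_eq_of_lt hp.2, add_zero]
      · simp only [mul_comm p.1 k, Nat.mul_add_mod, Nat.mod_eq_of_lt hp.2]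
    · intro m hm
      rw [Finset.mem_range] at hm
      have hk : 0 < k := by
        rcases Nat.eq_zero_or_pos k with h | h
        · subst h; simp at hm
        · exact h
      rw [colorOf_succ hk, pow_mul]
  rw [h2, Finset.sum_product, colorOf_zero, Nat.mul_zero, pow_zero]
  simp only [Finset.sum_const, Finset.card_range, nsmul_eq_mul]
  rw [← Finset.mul_sum]
  by_cases hs : s = 0
  · subst hs
    simp only [ZMod.val_zero, pow_zero, one_pow, Finset.sum_const, Finset.card_range,
      nsmul_eq_mul, mul_one, if_true]
    ring
  · rw [if_neg hs]
    have hω : (ζ ^ s.val) ≠ 1 := by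
      refine hζ.pow_ne_one_of_pos_of_lt ?_ (ZMod.val_lt s)
      exact fun h => hs ((ZMod.val_eq_zero s).1 h)
    rw [geom_sum_eq hω]
    have : (ζ ^ s.val) ^ r = 1 := by
      rw [← pow_mul, mul_comm, pow_mul, hζ.pow_eq_one, one_pow]
    rw [this, sub_self, zero_div, mul_zero, zero_add]

/-! ### The quotient by cycles -/

variable {n : ℕ}

def cycSetoid (σ : Equiv.Perm (Fin n)) : Setoid (Fin n) :=
  ⟨σ.SameCycle, ⟨fun _ => Equiv.Perm.SameCycle.refl _ _, fun h => h.symm, fun h h' => h.trans h'⟩⟩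

instance (σ : Equiv.Perm (Fin n)) : DecidableEq (Quotient (cycSetoid σ)) := fun a b =>
  Quotient.recOnSubsingleton₂ a b fun x y =>
    decidable_of_iff (σ.SameCycle x y) (Quotient.eq (r := cycSetoid σ)).symm

def fib (σ : Equiv.Perm (Fin n)) (q : Quotient (cycSetoid σ)) : Finset (Fin n) :=
  Finset.univ.filter fun i => Quotient.mk (cycSetoid σ) i = q

def qsum {r : ℕ} (σ : Equiv.Perm (Fin n)) (x : Fin n → ZMod r)
    (q : Quotient (cycSetoid σ)) : ZMod r :=
  ∑ i ∈ fib σ q, x i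

instance (σ : Equiv.Perm (Fin n)) : Fintype (Quotient (cycSetoid σ)) :=
  @Quotient.fintype _ _ (cycSetoid σ) fun a b => inferInstanceAs (Decidable (σ.SameCycle a b))

lemma mk_eq_mk_iff (σ : Equiv.Perm (Fin n)) {i j : Fin n} :
    Quotient.mk (cycSetoid σ) i = Quotient.mk (cycSetoid σ) j ↔ σ.SameCycle i j :=
  ⟨fun h => Quotient.exact h, fun h => Quotient.sound h⟩

lemma out_sameCycle (σ : Equiv.Perm (Fin n)) (i : Fin n) :
    σ.SameCycle (Quotient.mk (cycSetoid σ) i).out i := by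
  rw [← mk_eq_mk_iff σ]
  rw [Quotient.out_eq]

lemma fib_of_fixed (σ : Equiv.Perm (Fin n)) (q : Quotient (cycSetoid σ))
    (hq : σ q.out = q.out) : fib σ q = {q.out} := by
  ext i
  simp only [fib, Finset.mem_filter, Finset.mem_univ, true_and, Finset.mem_singleton]
  constructor
  · intro hi
    have h1 : σ.SameCycle q.out i := by
      rw [← mk_eq_mk_iff σ, Quotient.out_eq, hi]
    obtain ⟨m, hm⟩ := h1
    rw [Equiv.Perm.zpow_apply_eq_self_of_apply_eq_self hq m] at hm
    exact hm.symm
  · rintro rfl; exact Quotient.out_eq q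

lemma fib_of_not_fixed (σ : Equiv.Perm (Fin n)) (q : Quotient (cycSetoid σ))
    (hq : σ q.out ≠ q.out) : fib σ q = (σ.cycleOf q.out).support := by
  ext i
  simp only [fib, Finset.mem_filter, Finset.mem_univ, true_and]
  rw [Equiv.Perm.mem_support_cycleOf_iff]
  constructor
  · intro hi
    refine ⟨?_, Equiv.Perm.mem_support.2 hq⟩
    rw [← mk_eq_mk_iff σ, Quotient.out_eq, hi]
  · rintro ⟨h1, _⟩
    rw [← Quotient.out_eq q]
    exact Quotient.sound h1.symm

lemma card_qsum_zero (r : ℕ) (σ : Equiv.Perm (Fin n)) (x : Fin n → ZMod r) :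
    (Finset.univ.filter fun q : Quotient (cycSetoid σ) => qsum σ x q = 0).card
      = blockLen r n σ x := by
  have hsplit := Finset.card_filter_add_card_filter_not
    (s := Finset.univ.filter fun q : Quotient (cycSetoid σ) => qsum σ x q = 0)
    (p := fun q => σ q.out = q.out)
  rw [Finset.filter_filter, Finset.filter_filter] at hsplit
  have hfix : (Finset.univ.filter fun q : Quotient (cycSetoid σ) =>
      qsum σ x q = 0 ∧ σ q.out = q.out).card
      = (Finset.univ.filter (fun i : Fin n => σ i = i ∧ x i = 0)).card := by
    refine Finset.card_bij (fun q _ => q.out) ?_ ?_ ?_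
    · intro q hq
      simp only [Finset.mem_filter, Finset.mem_univ, true_and] at hq ⊢
      obtain ⟨hS, hf⟩ := hq
      refine ⟨hf, ?_⟩
      rwa [qsum, fib_of_fixed σ q hf, Finset.sum_singleton] at hS
    · intro q₁ _ q₂ _ h
      rw [← Quotient.out_eq q₁, ← Quotient.out_eq q₂, h]
    · intro i hi
      simp only [Finset.mem_filter, Finset.mem_univ, true_and] at hi
      obtain ⟨m, hm⟩ := (out_sameCycle σ i).symm
      rw [Equiv.Perm.zpow_apply_eq_self_of_apply_eq_self hi.1 m] at hm
      have hf : σ (Quotient.mk (cycSetoid σ) i).out = (Quotient.mk (cycSetoid σ) i).out := by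
        rw [← hm]; exact hi.1
      refine ⟨Quotient.mk (cycSetoid σ) i, ?_, hm.symm⟩
      simp only [Finset.mem_filter, Finset.mem_univ, true_and]
      refine ⟨?_, hf⟩
      rw [qsum, fib_of_fixed σ _ hf, Finset.sum_singleton, ← hm]
      exact hi.2
  have hsupp : (Finset.univ.filter fun q : Quotient (cycSetoid σ) =>
      qsum σ x q = 0 ∧ ¬ σ q.out = q.out).card
      = (σ.cycleFactorsFinset.filter (fun c => (∑ i ∈ c.support, x i) = 0)).card := by
    refine Finset.card_bij (fun q _ => σ.cycleOf q.out) ?_ ?_ ?_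
    · intro q hq
      simp only [Finset.mem_filter, Finset.mem_univ, true_and] at hq
      obtain ⟨hS, hf⟩ := hq
      refine Finset.mem_filter.2 ⟨Equiv.Perm.cycleOf_mem_cycleFactorsFinset_iff.2
        (Equiv.Perm.mem_support.2 hf), ?_⟩
      rwa [qsum, fib_of_not_fixed σ q hf] at hS
    · intro q₁ h₁ q₂ h₂ h
      simp only [Finset.mem_filter, Finset.mem_univ, true_and] at h₁ h₂
      have hmem : q₂.out ∈ (σ.cycleOf q₁.out).support := by
        rw [h, Equiv.Perm.mem_support_cycleOf_iff]
        exact ⟨Equiv.Perm.SameCycle.refl _ _, Equiv.Perm.mem_support.2 h₂.2⟩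
      rw [Equiv.Perm.mem_support_cycleOf_iff] at hmem
      rw [← Quotient.out_eq q₁, ← Quotient.out_eq q₂]
      exact Quotient.sound hmem.1
    · intro c hc
      rw [Finset.mem_filter] at hc
      obtain ⟨hc1, hc2⟩ := hc
      have hcyc : c.IsCycle := (Equiv.Perm.mem_cycleFactorsFinset_iff.1 hc1).1
      obtain ⟨a, ha⟩ := hcyc.nonempty_support
      have hceq : c = σ.cycleOf a := Equiv.Perm.cycle_is_cycleOf ha hc1
      have hasup : a ∈ σ.support := by
        rw [Equiv.Perm.mem_support,
          ← (Equiv.Perm.mem_cycleFactorsFinset_iff.1 hc1).2 a ha]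
        exact Equiv.Perm.mem_support.1 ha
      have hout := out_sameCycle σ a
      have houts : (Quotient.mk (cycSetoid σ) a).out ∈ σ.support := by
        have : (Quotient.mk (cycSetoid σ) a).out ∈ (σ.cycleOf a).support :=
          Equiv.Perm.mem_support_cycleOf_iff.2 ⟨hout.symm, hasup⟩
        exact (Equiv.Perm.support_cycleOf_le σ a) this
      have hf : ¬ σ (Quotient.mk (cycSetoid σ) a).out = (Quotient.mk (cycSetoid σ) a).out :=
        Equiv.Perm.mem_support.1 houts
      have hcyceq : σ.cycleOf (Quotient.mk (cycSetoid σ) a).out = c := by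
        rw [hout.cycleOf_eq, ← hceq]
      refine ⟨Quotient.mk (cycSetoid σ) a, ?_, hcyceq⟩
      simp only [Finset.mem_filter, Finset.mem_univ, true_and]
      refine ⟨?_, hf⟩
      rw [qsum, fib_of_not_fixed σ _ hf, hcyceq]
      exact hc2
  unfold blockLen
  rw [← hsplit, hfix, hsupp, Nat.add_comm]

theorem character_tensor_eq_pow_blockLen (r n k : ℕ) (hr : 0 < r)
    (ζ : ℂ) (hζ : IsPrimitiveRoot ζ r)
    (σ : Equiv.Perm (Fin n)) (x : Fin n → ZMod r) :
    (∑ b : Fin n → Fin (r * k + 1),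
        if ∀ i, b (σ i) = b i then
          ∏ i, ζ ^ ((x i).val * colorOf k (b i : ℕ)) else 0) =
      ((r : ℂ) * k + 1) ^ blockLen r n σ x := by
  haveI : NeZero r := ⟨hr.ne'⟩
  -- invariance of fixed `b` on cycles
  have hpow : ∀ (b : Fin n → Fin (r * k + 1)), (∀ i, b (σ i) = b i) →
      ∀ (m : ℕ) (i), b ((σ ^ m) i) = b i := by
    intro b hb m
    induction m with
    | zero => intro i; simp
    | succ m ih =>
      intro i
      rw [pow_succ, Equiv.Perm.mul_apply, ih (σ i), hb i]
  have hconst : ∀ (b : Fin n → Fin (r * k + 1)), (∀ i, b (σ i) = b i) →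
      ∀ i j, σ.SameCycle i j → b i = b j := by
    intro b hb i j hij
    obtain ⟨m, _, rfl⟩ := hij.exists_pow_eq'
    exact (hpow b hb m i).symm
  -- Step A: restrict sum to the filter
  rw [← Finset.sum_filter]
  -- Step B: reindex by functions on the quotient
  have stepB : ∑ b ∈ Finset.univ.filter (fun b : Fin n → Fin (r * k + 1) => ∀ i, b (σ i) = b i),
        ∏ i, ζ ^ ((x i).val * colorOf k (b i : ℕ))
      = ∑ g : Quotient (cycSetoid σ) → Fin (r * k + 1),
          ∏ i, ζ ^ ((x i).val * colorOf k ((g (Quotient.mk (cycSetoid σ) i)) : ℕ)) := by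
    refine Finset.sum_nbij' (fun b => fun q => b q.out)
      (fun g => fun i => g (Quotient.mk (cycSetoid σ) i)) ?_ ?_ ?_ ?_ ?_
    · intro b _; exact Finset.mem_univ _
    · intro g _
      simp only [Finset.mem_filter, Finset.mem_univ, true_and]
      intro i
      congr 1
      rw [mk_eq_mk_iff σ]
      exact (show σ.SameCycle i (σ i) from ⟨1, by simp⟩).symm
    · intro b hb
      simp only [Finset.mem_filter, Finset.mem_univ, true_and] at hb
      funext i
      exact hconst b hb _ _ (out_sameCycle σ i)
    · intro g _
      funext q
      simp only [Quotient.out_eq]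
    · intro b hb
      simp only [Finset.mem_filter, Finset.mem_univ, true_and] at hb
      refine Finset.prod_congr rfl fun i _ => ?_
      rw [hconst b hb i (Quotient.mk (cycSetoid σ) i).out (out_sameCycle σ i).symm]
  rw [stepB]
  -- Step C: regroup the product along the fibers
  have hpowmod : ∀ (M : ℕ), ζ ^ M = ζ ^ ((M : ZMod r)).val := by
    intro M
    conv_lhs => rw [← Nat.div_add_mod M r]
    rw [pow_add, pow_mul, hζ.pow_eq_one, one_pow, one_mul, ZMod.val_natCast]
  have stepC : ∀ g : Quotient (cycSetoid σ) → Fin (r * k + 1),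
      ∏ i, ζ ^ ((x i).val * colorOf k ((g (Quotient.mk (cycSetoid σ) i)) : ℕ))
        = ∏ q : Quotient (cycSetoid σ), ζ ^ ((qsum σ x q).val * colorOf k ((g q) : ℕ)) := by
    intro g
    rw [← Finset.prod_fiberwise Finset.univ (fun i => Quotient.mk (cycSetoid σ) i)
      (fun i => ζ ^ ((x i).val * colorOf k ((g (Quotient.mk (cycSetoid σ) i)) : ℕ)))]
    refine Finset.prod_congr rfl fun q _ => ?_
    have h1 : ∏ i ∈ fib σ q, ζ ^ ((x i).val * colorOf k ((g (Quotient.mk (cycSetoid σ) i)) : ℕ))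
        = ∏ i ∈ fib σ q, ζ ^ ((x i).val * colorOf k ((g q) : ℕ)) := by
      refine Finset.prod_congr rfl fun i hi => ?_
      rw [(Finset.mem_filter.1 hi).2]
    rw [show Finset.filter (fun i => Quotient.mk (cycSetoid σ) i = q) Finset.univ = fib σ q
      from rfl, h1, Finset.prod_pow_eq_pow_sum, ← Finset.sum_mul, pow_mul,
      hpowmod (∑ i ∈ fib σ q, (x i).val), ← pow_mul]
    congr 2
    rw [Nat.cast_sum]
    simp only [ZMod.natCast_zmod_val]
    rfl
  simp only [stepC]
  -- Step D: swap sum and product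
  rw [← Fintype.piFinset_univ, ← Finset.prod_univ_sum (fun _ => Finset.univ)
    (fun (q : Quotient (cycSetoid σ)) (v : Fin (r * k + 1)) =>
      ζ ^ ((qsum σ x q).val * colorOf k (v : ℕ)))]
  -- Step E: evaluate the inner sums
  have stepE : ∀ q : Quotient (cycSetoid σ),
      ∑ v : Fin (r * k + 1), ζ ^ ((qsum σ x q).val * colorOf k (v : ℕ))
        = if qsum σ x q = 0 then ((r : ℂ) * k + 1) else 1 :=
    fun q => key_sum r k hr ζ hζ (qsum σ x q)
  simp only [stepE]
  -- Step F: compute the product of the ifs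
  rw [Finset.prod_ite, Finset.prod_const, Finset.prod_const, one_pow, mul_one,
    card_qsum_zero r σ x]
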